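/- Let 1 < p < ∞ and let f, g be real-valued functions in L^p(ℝⁿ). Then ‖g‖^p_{L^p} − ‖f‖^p_{L^p} + p ∫ (|f|^p − |f|^{p−2} f g) dx = p ∫ I_p(f, g)(x) |f(x) − g(x)|² dx, where I_p(h, k)(x) = (p−1) ∫_0^1 |ξ h(x) + (1−ξ) k(x)|^{p−2} ξ dξ; in particular I_p ≥ 0 pointwise. -/

import Mathlib

open MeasureTheory Real

open MeasureTheory Real Set Filter
open scoped ENNReal

section Aux

variable {p : ℝ}

private lemma abs_rpow_mul_self {t : ℝ} (hp : 1 < p) :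
    |t| ^ (p - 2) * |t| = |t| ^ (p - 1) := by
  rcases eq_or_ne t 0 with rfl | ht
  · simp [Real.zero_rpow (by linarith : p - 1 ≠ 0)]
  · rw [show p - 1 = p - 2 + 1 by ring, Real.rpow_add_one (abs_ne_zero.2 ht)]

private lemma sq_rpow {a : ℝ} (hp : 1 < p) : |a| ^ (p - 2) * a * a = |a| ^ p := by
  rcases eq_or_ne a 0 with rfl | ha
  · simp [Real.zero_rpow (by linarith : p ≠ 0)]
  · have h1 : a * a = |a| * |a| := (abs_mul_abs_self a).symm
    rw [mul_assoc, h1, ← mul_assoc, abs_rpow_mul_self hp,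
      show p = p - 1 + 1 by ring, Real.rpow_add_one (abs_ne_zero.2 ha)]
    ring_nf

private lemma myHasDerivAt_abs_rpow (hp : 1 < p) {t : ℝ} (ht : t ≠ 0) :
    HasDerivAt (fun s : ℝ => |s| ^ p) (p * (|t| ^ (p - 2) * t)) t := by
  rcases ht.lt_or_gt with h | h
  · have hd : HasDerivAt (fun s : ℝ => (-s) ^ p) (p * (-t) ^ (p - 1) * (-1)) t := by
      exact (Real.hasDerivAt_rpow_const (Or.inl (by linarith : (-t) ≠ 0))).comp t
        (hasDerivAt_neg t)
    have he : (fun s : ℝ => |s| ^ p) =ᶠ[nhds t] fun s => (-s) ^ p := by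
      filter_upwards [eventually_lt_nhds h] with s hs
      rw [abs_of_neg hs]
    have := hd.congr_of_eventuallyEq he
    refine this.congr_deriv (Eq.symm ?_)
    rw [abs_of_neg h, show p - 1 = p - 2 + 1 by ring,
      Real.rpow_add_one (by linarith : (-t) ≠ 0)]
    ring
  · have hd : HasDerivAt (fun s : ℝ => s ^ p) (p * t ^ (p - 1)) t :=
      Real.hasDerivAt_rpow_const (Or.inl (ne_of_gt h))
    have he : (fun s : ℝ => |s| ^ p) =ᶠ[nhds t] fun s => s ^ p := by
      filter_upwards [eventually_gt_nhds h] with s hs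
      rw [abs_of_pos hs]
    have := hd.congr_of_eventuallyEq he
    refine this.congr_deriv (Eq.symm ?_)
    rw [abs_of_pos h, show p - 1 = p - 2 + 1 by ring,
      Real.rpow_add_one (ne_of_gt h)]

private lemma myHasDerivAt_abs_rpow_mul (hp : 1 < p) {t : ℝ} (ht : t ≠ 0) :
    HasDerivAt (fun s : ℝ => |s| ^ (p - 2) * s) ((p - 1) * |t| ^ (p - 2)) t := by
  rcases ht.lt_or_gt with h | h
  · have hd : HasDerivAt (fun s : ℝ => -((-s) ^ (p - 1)))
        (-((p - 1) * (-t) ^ (p - 1 - 1) * (-1))) t := by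
      exact (((Real.hasDerivAt_rpow_const
        (Or.inl (by linarith : (-t) ≠ 0))).comp t (hasDerivAt_neg t))).neg
    have he : (fun s : ℝ => |s| ^ (p - 2) * s) =ᶠ[nhds t] fun s => -((-s) ^ (p - 1)) := by
      filter_upwards [eventually_lt_nhds h] with s hs
      rw [abs_of_neg hs, show p - 1 = p - 2 + 1 by ring,
        Real.rpow_add_one (by linarith : (-s) ≠ 0)]
      ring
    have := hd.congr_of_eventuallyEq he
    refine this.congr_deriv (Eq.symm ?_)
    rw [abs_of_neg h, show p - 1 - 1 = p - 2 by ring]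
    ring
  · have hd : HasDerivAt (fun s : ℝ => s ^ (p - 1)) ((p - 1) * t ^ (p - 1 - 1)) t :=
      Real.hasDerivAt_rpow_const (Or.inl (ne_of_gt h))
    have he : (fun s : ℝ => |s| ^ (p - 2) * s) =ᶠ[nhds t] fun s => s ^ (p - 1) := by
      filter_upwards [eventually_gt_nhds h] with s hs
      rw [abs_of_pos hs, show p - 1 = p - 2 + 1 by ring, Real.rpow_add_one (ne_of_gt hs)]
    have := hd.congr_of_eventuallyEq he
    refine this.congr_deriv (Eq.symm ?_)
    rw [abs_of_pos h, show p - 1 - 1 = p - 2 by ring]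

private lemma continuous_abs_rpow (hp : 1 < p) : Continuous fun t : ℝ => |t| ^ p :=
  (Real.continuous_rpow_const (by linarith)).comp continuous_abs

private lemma continuous_abs_rpow_mul (hp : 1 < p) :
    Continuous fun t : ℝ => |t| ^ (p - 2) * t := by
  rw [continuous_iff_continuousAt]
  intro t
  rcases eq_or_ne t 0 with rfl | ht
  · have key : Tendsto (fun t : ℝ => |t| ^ (p - 2) * t) (nhds 0) (nhds 0) := by
      apply squeeze_zero_norm (a := fun t : ℝ => |t| ^ (p - 1))
      · intro s
        rw [Real.norm_eq_abs, abs_mul, Real.abs_rpow_of_nonneg (abs_nonneg s), abs_abs]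
        rw [abs_rpow_mul_self hp]
      · have hco : Continuous fun t : ℝ => |t| ^ (p - 1) :=
          (Real.continuous_rpow_const (by linarith)).comp continuous_abs
        have h := hco.tendsto 0
        simpa [Real.zero_rpow (by linarith : p - 1 ≠ 0)] using h
    simpa [ContinuousAt] using key
  · exact ((Real.continuousAt_rpow_const _ _ (Or.inl (abs_ne_zero.2 ht))).comp
      continuous_abs.continuousAt).mul continuousAt_id

private lemma intervalIntegrable_abs_rpow {r : ℝ} (hr : -1 < r) (u v : ℝ) :
    IntervalIntegrable (fun x : ℝ => |x| ^ r) volume u v := by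
  have H : ∀ c : ℝ, 0 ≤ c → IntervalIntegrable (fun x : ℝ => |x| ^ r) volume 0 c := by
    intro c hc
    have h := intervalIntegral.intervalIntegrable_rpow' (a := 0) (b := c) hr
    rw [intervalIntegrable_iff] at h ⊢
    apply h.congr_fun ?_ measurableSet_uIoc
    intro x hx
    rw [uIoc_of_le hc] at hx
    simp only [abs_of_pos hx.1]
  have H2 : ∀ c : ℝ, IntervalIntegrable (fun x : ℝ => |x| ^ r) volume 0 c := by
    intro c
    rcases le_total 0 c with hc | hc
    · exact H c hc
    · have h := (IntervalIntegrable.iff_comp_neg (by simp)).mp (H (-c) (by linarith))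
      simpa using h
  exact (H2 u).symm.trans (H2 v)

private lemma ftc_except {K K' : ℝ → ℝ} {u v : ℝ} (huv : u ≤ v) (ξ₀ : ℝ)
    (hK : Continuous K) (hd : ∀ ξ, ξ ≠ ξ₀ → HasDerivAt K (K' ξ) ξ)
    (hint : IntervalIntegrable K' volume u v) :
    ∫ ξ in u..v, K' ξ = K v - K u := by
  set m := max u (min ξ₀ v) with hm
  have hum : u ≤ m := le_max_left _ _
  have hmv : m ≤ v := max_le huv (min_le_right _ _)
  have h1 : ∀ x ∈ Ioo u m, x ≠ ξ₀ := by
    intro x hx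
    rcases le_total ξ₀ u with h | h
    · exfalso
      have : m = u := by
        rw [hm, max_eq_left ((min_le_left _ _).trans h)]
      rw [this] at hx
      exact absurd (hx.1.trans hx.2) (lt_irrefl _)
    · rcases le_total ξ₀ v with h2 | h2
      · have : m = ξ₀ := by rw [hm, min_eq_left h2, max_eq_right h]
        exact ne_of_lt (this ▸ hx.2)
      · have : m = v := by rw [hm, min_eq_right h2, max_eq_right (huv)]
        exact ne_of_lt ((this ▸ hx.2).trans_le h2)
  have h2 : ∀ x ∈ Ioo m v, x ≠ ξ₀ := by
    intro x hx
    rcases le_total ξ₀ v with h | h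
    · have : ξ₀ ≤ m := (min_eq_left h ▸ le_max_right u (min ξ₀ v))
      exact (ne_of_gt (this.trans_lt hx.1))
    · exact ne_of_lt (hx.2.trans_le h)
  have i1 : IntervalIntegrable K' volume u m :=
    hint.mono_set (by rw [uIcc_of_le hum, uIcc_of_le huv]; exact Icc_subset_Icc le_rfl hmv)
  have i2 : IntervalIntegrable K' volume m v :=
    hint.mono_set (by rw [uIcc_of_le hmv, uIcc_of_le huv]; exact Icc_subset_Icc hum le_rfl)
  have e1 : ∫ ξ in u..m, K' ξ = K m - K u :=
    intervalIntegral.integral_eq_sub_of_hasDerivAt_of_le hum hK.continuousOn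
      (fun x hx => hd x (h1 x hx)) i1
  have e2 : ∫ ξ in m..v, K' ξ = K v - K m :=
    intervalIntegral.integral_eq_sub_of_hasDerivAt_of_le hmv hK.continuousOn
      (fun x hx => hd x (h2 x hx)) i2
  rw [← intervalIntegral.integral_add_adjacent_intervals i1 i2, e1, e2]
  ring

end Aux

private lemma key_identity {p : ℝ} (hp : 1 < p) (a b : ℝ) :
    |b| ^ p - |a| ^ p + p * (|a| ^ p - |a| ^ (p - 2) * a * b) =
      p * ((p - 1) * ∫ ξ in (0:ℝ)..1, |ξ * a + (1 - ξ) * b| ^ (p - 2) * ξ) * (a - b) ^ 2 := by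
  have hsq := sq_rpow (a := a) hp
  by_cases hab : a = b
  · subst hab
    rw [← hsq]
    ring
  · have hba : b - a ≠ 0 := sub_ne_zero.2 fun h => hab h.symm
    set ξ₀ : ℝ := b / (b - a) with hξ₀
    have hc : ∀ ξ : ℝ, ξ * a + (1 - ξ) * b = (a - b) * (ξ - ξ₀) := by
      intro ξ
      rw [hξ₀]
      field_simp
      ring
    have hcz : ∀ ξ : ℝ, ξ ≠ ξ₀ → ξ * a + (1 - ξ) * b ≠ 0 := by
      intro ξ hξ
      rw [hc]
      exact mul_ne_zero (sub_ne_zero.2 hab) (sub_ne_zero.2 hξ)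
    have hccont : Continuous fun ξ : ℝ => ξ * a + (1 - ξ) * b :=
      (continuous_id.mul continuous_const).add
        ((continuous_const.sub continuous_id).mul continuous_const)
    -- integrability of ξ ↦ |c ξ| ^ (p-2)
    have habs : IntervalIntegrable (fun ξ : ℝ => |ξ * a + (1 - ξ) * b| ^ (p - 2))
        volume 0 1 := by
      have h1 : IntervalIntegrable (fun ξ : ℝ => |ξ - ξ₀| ^ (p - 2)) volume 0 1 := by
        have := (intervalIntegrable_abs_rpow (r := p - 2) (by linarith) (-ξ₀)
          (1 - ξ₀)).comp_sub_right ξ₀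
        simpa using this
      have h2 := h1.const_mul (|a - b| ^ (p - 2))
      have heq : (fun ξ : ℝ => |ξ * a + (1 - ξ) * b| ^ (p - 2)) =
          fun ξ : ℝ => |a - b| ^ (p - 2) * |ξ - ξ₀| ^ (p - 2) := by
        funext ξ
        rw [hc, abs_mul, Real.mul_rpow (abs_nonneg _) (abs_nonneg _)]
      rw [heq]
      exact h2
    have hJ : IntervalIntegrable (fun ξ : ℝ => |ξ * a + (1 - ξ) * b| ^ (p - 2) * ξ)
        volume 0 1 := habs.mul_continuousOn continuous_id.continuousOn
    -- the function K and its derivative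
    set K : ℝ → ℝ := fun ξ => |ξ * a + (1 - ξ) * b| ^ p -
      p * ξ * (a - b) * (|ξ * a + (1 - ξ) * b| ^ (p - 2) * (ξ * a + (1 - ξ) * b)) with hK
    set K' : ℝ → ℝ := fun ξ =>
      (-(p * (p - 1) * (a - b) ^ 2)) * (|ξ * a + (1 - ξ) * b| ^ (p - 2) * ξ) with hK'
    have hKcont : Continuous K := by
      apply Continuous.sub
      · exact (continuous_abs_rpow hp).comp hccont
      · exact (((continuous_const.mul continuous_id).mul continuous_const).mul
          ((continuous_abs_rpow_mul hp).comp hccont))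
    have hKd : ∀ ξ : ℝ, ξ ≠ ξ₀ → HasDerivAt K (K' ξ) ξ := by
      intro ξ hξ
      have hcξ := hcz ξ hξ
      have hcd : HasDerivAt (fun ξ : ℝ => ξ * a + (1 - ξ) * b) (a - b) ξ := by
        have := ((hasDerivAt_id ξ).mul_const a).add
          (((hasDerivAt_const ξ (1 : ℝ)).sub (hasDerivAt_id ξ)).mul_const b)
        exact this.congr_deriv (by ring)
      have h1 : HasDerivAt (fun ξ : ℝ => |ξ * a + (1 - ξ) * b| ^ p)
          (p * (|ξ * a + (1 - ξ) * b| ^ (p - 2) * (ξ * a + (1 - ξ) * b)) * (a - b)) ξ :=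
        by have := (myHasDerivAt_abs_rpow hp hcξ).comp ξ hcd; exact this
      have h2 : HasDerivAt
          (fun ξ : ℝ => |ξ * a + (1 - ξ) * b| ^ (p - 2) * (ξ * a + (1 - ξ) * b))
          ((p - 1) * |ξ * a + (1 - ξ) * b| ^ (p - 2) * (a - b)) ξ :=
        by have := (myHasDerivAt_abs_rpow_mul hp hcξ).comp ξ hcd; exact this
      have h3 : HasDerivAt (fun ξ : ℝ => p * ξ * (a - b)) (p * (a - b)) ξ := by
        have := ((hasDerivAt_id ξ).const_mul p).mul_const (a - b)
        exact this.congr_deriv (by ring)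
      have h4 := (h3.mul h2)
      have h5 := h1.sub h4
      refine h5.congr_deriv ?_
      rw [hK']
      ring
    have hK'int : IntervalIntegrable K' volume 0 1 := hJ.const_mul _
    have hftc := ftc_except zero_le_one ξ₀ hKcont hKd hK'int
    have hval : ∫ ξ in (0:ℝ)..1, K' ξ =
        (-(p * (p - 1) * (a - b) ^ 2)) *
          ∫ ξ in (0:ℝ)..1, |ξ * a + (1 - ξ) * b| ^ (p - 2) * ξ := by
      rw [hK']
      exact intervalIntegral.integral_const_mul _ _
    rw [hval] at hftc
    have hK1 : K 1 = |a| ^ p - p * (a - b) * (|a| ^ (p - 2) * a) := by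
      rw [hK]; norm_num
    have hK0 : K 0 = |b| ^ p := by
      rw [hK]; norm_num
    rw [hK1, hK0] at hftc
    linear_combination hftc - p * hsq

/-- Convexity-remainder identity for `L^p` norms: for `1 < p < ∞` and real-valued
`f, g ∈ L^p(ℝⁿ)`,
`‖g‖_p^p - ‖f‖_p^p + p ∫ (|f|^p - |f|^{p-2} f g) = p ∫ I_p(f,g) |f - g|²`
with `I_p(f,g)(x) = (p-1) ∫_0^1 |ξ f(x) + (1-ξ) g(x)|^{p-2} ξ dξ ≥ 0`. -/
theorem Lp_convexity_remainder {n : ℕ} (p : ℝ) (hp : 1 < p)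
    (f g : EuclideanSpace ℝ (Fin n) → ℝ)
    (hf : MemLp f (ENNReal.ofReal p) volume)
    (hg : MemLp g (ENNReal.ofReal p) volume) :
    (∫ x, |g x| ^ p) - (∫ x, |f x| ^ p) +
        p * ∫ x, (|f x| ^ p - |f x| ^ (p - 2) * f x * g x) =
      p * ∫ x, ((p - 1) * ∫ ξ in (0 : ℝ)..1,
          |ξ * f x + (1 - ξ) * g x| ^ (p - 2) * ξ) * (f x - g x) ^ 2 ∧
    ∀ x, 0 ≤ (p - 1) * ∫ ξ in (0 : ℝ)..1, |ξ * f x + (1 - ξ) * g x| ^ (p - 2) * ξ := by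
  have hp0 : (0 : ℝ) < p := by linarith
  have hP0 : ENNReal.ofReal p ≠ 0 := by
    simp only [ne_eq, ENNReal.ofReal_eq_zero, not_le]
    exact hp0
  have hPt : ENNReal.ofReal p ≠ ⊤ := ENNReal.ofReal_ne_top
  have hA : Integrable (fun x => |f x| ^ p) volume := by
    have := hf.integrable_norm_rpow hP0 hPt
    simpa [Real.norm_eq_abs, ENNReal.toReal_ofReal hp0.le] using this
  have hB : Integrable (fun x => |g x| ^ p) volume := by
    have := hg.integrable_norm_rpow hP0 hPt
    simpa [Real.norm_eq_abs, ENNReal.toReal_ofReal hp0.le] using this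
  have hq : MemLp (fun x => |f x| ^ (p - 1))
      (ENNReal.ofReal p / ENNReal.ofReal (p - 1)) volume := by
    have := hf.norm_rpow_div (ENNReal.ofReal (p - 1))
    simpa [Real.norm_eq_abs, ENNReal.toReal_ofReal (by linarith : (0:ℝ) ≤ p - 1)] using this
  have hφm : AEStronglyMeasurable (fun x => |f x| ^ (p - 2) * f x) volume :=
    (continuous_abs_rpow_mul hp).comp_aestronglyMeasurable hf.1
  have hφ : MemLp (fun x => |f x| ^ (p - 2) * f x)
      (ENNReal.ofReal p / ENNReal.ofReal (p - 1)) volume := by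
    refine hq.of_le hφm (Filter.Eventually.of_forall fun x => ?_)
    rw [Real.norm_eq_abs, Real.norm_eq_abs, abs_mul,
      Real.abs_rpow_of_nonneg (abs_nonneg _), abs_abs, abs_rpow_mul_self hp,
      Real.abs_rpow_of_nonneg (abs_nonneg _), abs_abs]
  have harith : (1 : ℝ≥0∞) / 1 =
      1 / (ENNReal.ofReal p / ENNReal.ofReal (p - 1)) + 1 / ENNReal.ofReal p := by
    rw [one_div, one_div, ENNReal.inv_div (Or.inl ENNReal.ofReal_ne_top)
      (Or.inl (by simp only [ne_eq, ENNReal.ofReal_eq_zero, not_le]; linarith))]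
    have hone : ENNReal.ofReal (p - 1) + 1 = ENNReal.ofReal p := by
      rw [show (1 : ℝ≥0∞) = ENNReal.ofReal 1 by simp,
        ← ENNReal.ofReal_add (by linarith) (by norm_num)]
      norm_num
    rw [ENNReal.div_add_div_same, hone, ENNReal.div_self hP0 hPt, inv_one]
  have hmul : Integrable (fun x => |f x| ^ (p - 2) * f x * g x) volume := by
    haveI : ENNReal.HolderTriple (ENNReal.ofReal p / ENNReal.ofReal (p - 1)) (ENNReal.ofReal p) 1 :=
      ⟨by simpa only [one_div] using harith.symm⟩
    have hsm := MemLp.smul (r := 1) hg hφ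
    have h0 := memLp_one_iff_integrable.mp hsm
    exact h0.congr (Filter.Eventually.of_forall fun x => rfl)
  have hkey : ∀ x,
      ((p - 1) * ∫ ξ in (0 : ℝ)..1, |ξ * f x + (1 - ξ) * g x| ^ (p - 2) * ξ) *
          (f x - g x) ^ 2 =
        (|f x| ^ p - |f x| ^ (p - 2) * f x * g x) + (|g x| ^ p - |f x| ^ p) / p := by
    intro x
    have h := key_identity hp (f x) (g x)
    have hp' : p ≠ 0 := ne_of_gt hp0
    apply mul_left_cancel₀ hp'
    have hd : p * ((|g x| ^ p - |f x| ^ p) / p) = |g x| ^ p - |f x| ^ p := by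
      field_simp
    linear_combination -h - hd
  constructor
  · have h1 : ∫ x, (|f x| ^ p - |f x| ^ (p - 2) * f x * g x) =
        (∫ x, |f x| ^ p) - ∫ x, |f x| ^ (p - 2) * f x * g x := integral_sub hA hmul
    have h2 : ∫ x, ((p - 1) * ∫ ξ in (0 : ℝ)..1,
          |ξ * f x + (1 - ξ) * g x| ^ (p - 2) * ξ) * (f x - g x) ^ 2 =
        ∫ x, ((|f x| ^ p - |f x| ^ (p - 2) * f x * g x) + (|g x| ^ p - |f x| ^ p) / p) :=
      integral_congr_ae (Filter.Eventually.of_forall hkey)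
    have h3 : ∫ x, ((|f x| ^ p - |f x| ^ (p - 2) * f x * g x) +
          (|g x| ^ p - |f x| ^ p) / p) =
        (∫ x, (|f x| ^ p - |f x| ^ (p - 2) * f x * g x)) +
          ∫ x, (|g x| ^ p - |f x| ^ p) / p :=
      integral_add (hA.sub hmul) ((hB.sub hA).div_const p)
    have h4 : ∫ x, (|g x| ^ p - |f x| ^ p) / p =
        ((∫ x, |g x| ^ p) - ∫ x, |f x| ^ p) / p := by
      rw [integral_div, integral_sub hB hA]
    rw [h2, h3, h4, h1]
    field_simp
    ring
  · intro x
    apply mul_nonneg (by linarith)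
    apply intervalIntegral.integral_nonneg zero_le_one
    intro ξ hξ
    exact mul_nonneg (Real.rpow_nonneg (abs_nonneg _) _) hξ.1
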